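/- For every vertex v in a walk W on uncertain graph 𝒢, α_W(v) = (∏_{w ∈ O_W(v)} P_𝒢((v,w))) · Σ_{x=0}^{n} r(n, x) · inv(x + |O_W(v)|)^{c_W(v)}, where {w_1, …, w_n} = O_𝒢(v) \ O_W(v) and r(n, x) is the probability that exactly x of the arcs (v, w_1), …, (v, w_n) exist. -/

import Mathlib

variable {V : Type*} [DecidableEq V]
variable {V : Type*} [DecidableEq V]

/-- The out-neighborhood of `u` in the possible world with edge set `G`. -/
def outN (G : Finset (V × V)) (u : V) : Finset V :=
  (G.filter (fun e => e.1 = u)).image Prod.snd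

/-- One-step transition probability of the random walk on the deterministic
graph with edge set `G`. -/
noncomputable def stepPr (G : Finset (V × V)) (u v : V) : ℝ :=
  if (u, v) ∈ G then 1 / (outN G u).card else 0

/-- Probability that the random walk on `G` started at `vs 0` visits
`vs 1, …, vs k` at times `1, …, k`. -/
noncomputable def walkPr (G : Finset (V × V)) (vs : ℕ → V) (k : ℕ) : ℝ :=
  ∏ i ∈ Finset.range k, stepPr G (vs i) (vs (i + 1))

/-- Probability `Pr(𝒢 ⇒ G)` of the possible world `G` of the uncertain graph
with edge set `E` and edge probabilities `P`. -/
noncomputable def worldPr (E : Finset (V × V)) (P : V × V → ℝ)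
    (G : Finset (V × V)) : ℝ :=
  (∏ e ∈ G, P e) * ∏ e ∈ E \ G, (1 - P e)

/-- The set of distinct vertices of the walk `vs 0, …, vs k`. -/
def VW (vs : ℕ → V) (k : ℕ) : Finset V := (Finset.range (k + 1)).image vs

/-- The set `O_W(v)` of out-neighbors of `v` used by the walk. -/
def OW (vs : ℕ → V) (k : ℕ) (v : V) : Finset V :=
  ((Finset.range k).filter (fun i => vs i = v)).image (fun i => vs (i + 1))

/-- The number `c_W(v)` of transitions of the walk leaving `v`. -/
def cW (vs : ℕ → V) (k : ℕ) (v : V) : ℕ :=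
  ((Finset.range k).filter (fun i => vs i = v)).card

/-- `inv x = 1/x` for `x ≠ 0`, and `inv 0 = 1`. -/
noncomputable def invR (x : ℕ) : ℝ := if x = 0 then 1 else 1 / x

/-- The factor `α_W(v)`: expectation of `inv(|O_G(v)|)^{c_W(v)}` over the
possible worlds `G` containing all arcs from `v` used by the walk. -/
noncomputable def alphaW (E : Finset (V × V)) (P : V × V → ℝ)
    (vs : ℕ → V) (k : ℕ) (v : V) : ℝ :=
  ∑ G ∈ E.powerset.filter (fun G => OW vs k v ⊆ outN G v),
    worldPr E P G * (invR (outN G v).card) ^ (cW vs k v)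

/-- `rD P v D x`: the probability that exactly `x` of the arcs from `v` to
the vertices of `D` exist (Poisson-binomial distribution). -/
noncomputable def rD (P : V × V → ℝ) (v : V) (D : Finset V) (x : ℕ) : ℝ :=
  ∑ S ∈ D.powerset.filter (fun S => S.card = x),
    (∏ w ∈ S, P (v, w)) * ∏ w ∈ D \ S, (1 - P (v, w))

lemma sum_worldPr (B : Finset (V × V)) (P : V × V → ℝ) :
    ∑ G ∈ B.powerset, worldPr B P G = 1 := by
  simp only [worldPr]
  rw [← Finset.prod_add]
  simp

lemma worldPr_union {A B : Finset (V × V)} (hAB : Disjoint A B) (P : V × V → ℝ)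
    {GA GB : Finset (V × V)} (hGA : GA ⊆ A) (hGB : GB ⊆ B) :
    worldPr (A ∪ B) P (GA ∪ GB) = worldPr A P GA * worldPr B P GB := by
  have hd : Disjoint GA GB := hAB.mono hGA hGB
  have hd2 : Disjoint (A \ GA) (B \ GB) :=
    hAB.mono Finset.sdiff_subset Finset.sdiff_subset
  have h1 : (A ∪ B) \ (GA ∪ GB) = (A \ GA) ∪ (B \ GB) := by
    ext e
    simp only [Finset.mem_sdiff, Finset.mem_union, not_or]
    constructor
    · rintro ⟨h | h, h2, h3⟩
      · exact Or.inl ⟨h, h2⟩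
      · exact Or.inr ⟨h, h3⟩
    · rintro (⟨h, h2⟩ | ⟨h, h2⟩)
      · exact ⟨Or.inl h, h2, fun hh => Finset.disjoint_left.mp hAB h (hGB hh)⟩
      · exact ⟨Or.inr h, fun hh => Finset.disjoint_right.mp hAB h (hGA hh), h2⟩
  simp only [worldPr, Finset.prod_union hd, h1, Finset.prod_union hd2]
  ring


lemma union_inter_eq_left {A B GA GB : Finset (V × V)} (hAB : Disjoint A B)
    (hGA : GA ⊆ A) (hGB : GB ⊆ B) : (GA ∪ GB) ∩ A = GA := by
  ext e
  simp only [Finset.mem_inter, Finset.mem_union]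
  constructor
  · rintro ⟨h1 | h1, h2⟩
    · exact h1
    · exact absurd h2 (Finset.disjoint_right.mp hAB (hGB h1))
  · intro h; exact ⟨Or.inl h, hGA h⟩

lemma sum_worldPr_inter {A B : Finset (V × V)} (hAB : Disjoint A B)
    (P : V × V → ℝ) (f : Finset (V × V) → ℝ) :
    ∑ G ∈ (A ∪ B).powerset, worldPr (A ∪ B) P G * f (G ∩ A)
      = ∑ GA ∈ A.powerset, worldPr A P GA * f GA := by
  calc ∑ G ∈ (A ∪ B).powerset, worldPr (A ∪ B) P G * f (G ∩ A)
      = ∑ p ∈ A.powerset ×ˢ B.powerset, (worldPr A P p.1 * f p.1) * worldPr B P p.2 := by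
        refine Finset.sum_bij' (fun G _ => (G ∩ A, G ∩ B)) (fun p _ => p.1 ∪ p.2) ?_ ?_ ?_ ?_ ?_
        · intro G hG
          simp [Finset.mem_product]
        · intro p hp
          simp only [Finset.mem_product, Finset.mem_powerset] at hp
          exact Finset.mem_powerset.mpr (Finset.union_subset_union hp.1 hp.2)
        · intro G hG
          dsimp only
          rw [← Finset.inter_union_distrib_left]
          exact Finset.inter_eq_left.mpr (Finset.mem_powerset.mp hG)
        · intro p hp
          simp only [Finset.mem_product, Finset.mem_powerset] at hp
          rw [union_inter_eq_left hAB hp.1 hp.2, Finset.union_comm,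
            union_inter_eq_left hAB.symm hp.2 hp.1]
        · intro G hG
          dsimp only
          have hG' : G ⊆ A ∪ B := Finset.mem_powerset.mp hG
          have hGu : (G ∩ A) ∪ (G ∩ B) = G := by
            rw [← Finset.inter_union_distrib_left]
            exact Finset.inter_eq_left.mpr hG'
          rw [← hGu, worldPr_union hAB P Finset.inter_subset_right Finset.inter_subset_right,
            union_inter_eq_left hAB Finset.inter_subset_right Finset.inter_subset_right, hGu]
          ring
    _ = ∑ GA ∈ A.powerset, worldPr A P GA * f GA := by
        rw [Finset.sum_product]
        refine Finset.sum_congr rfl fun GA _ => ?_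
        dsimp only
        rw [← Finset.mul_sum, sum_worldPr, mul_one]

lemma sum_over_arcs (E : Finset (V × V)) (P : V × V → ℝ) (v : V) (f : Finset V → ℝ) :
    ∑ GA ∈ (E.filter (fun e => e.1 = v)).powerset,
        worldPr (E.filter (fun e => e.1 = v)) P GA * f (GA.image Prod.snd)
      = ∑ T ∈ (outN E v).powerset,
          ((∏ w ∈ T, P (v, w)) * ∏ w ∈ outN E v \ T, (1 - P (v, w))) * f T := by
  set A := E.filter (fun e => e.1 = v) with hA
  have hfst : ∀ e ∈ A, e.1 = v := fun e he => (Finset.mem_filter.mp he).2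
  have hinj : ∀ x ∈ A, ∀ y ∈ A, x.2 = y.2 → x = y := by
    intro x hx y hy h
    exact Prod.ext ((hfst x hx).trans (hfst y hy).symm) h
  have hNA : outN E v = A.image Prod.snd := rfl
  refine Finset.sum_bij' (fun GA _ => GA.image Prod.snd)
    (fun T _ => T.image (fun w => (v, w))) ?_ ?_ ?_ ?_ ?_
  · intro GA hGA
    rw [Finset.mem_powerset, hNA]
    exact Finset.image_subset_image (Finset.mem_powerset.mp hGA)
  · intro T hT
    rw [Finset.mem_powerset] at hT ⊢
    intro e he
    simp only [Finset.mem_image] at he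
    obtain ⟨w, hw, rfl⟩ := he
    have h2 := hT hw
    rw [hNA] at h2
    simp only [Finset.mem_image] at h2
    obtain ⟨e', he', hw'⟩ := h2
    rw [show ((v, w) : V × V) = e' from Prod.ext (hfst e' he').symm hw'.symm]
    exact he'
  · intro GA hGA
    ext e
    simp only [Finset.mem_image]
    constructor
    · rintro ⟨w, ⟨e', he', rfl⟩, rfl⟩
      rwa [show ((v, e'.2) : V × V) = e' from Prod.ext (hfst e' (Finset.mem_powerset.mp hGA he')).symm rfl]
    · intro he
      exact ⟨e.2, ⟨e, he, rfl⟩, Prod.ext (hfst e (Finset.mem_powerset.mp hGA he)).symm rfl⟩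
  · intro T hT
    rw [Finset.image_image]
    simp
  · intro GA hGA
    have hGA' := Finset.mem_powerset.mp hGA
    congr 1
    have h1 : ∏ w ∈ GA.image Prod.snd, P (v, w) = ∏ e ∈ GA, P e := by
      rw [Finset.prod_image (fun x hx y hy => hinj x (hGA' hx) y (hGA' hy))]
      exact Finset.prod_congr rfl fun e he =>
        congrArg P (Prod.ext (hfst e (hGA' he)).symm rfl)
    have h2 : outN E v \ GA.image Prod.snd = (A \ GA).image Prod.snd := by
      rw [hNA]
      ext w
      simp only [Finset.mem_sdiff, Finset.mem_image]
      constructor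
      · rintro ⟨⟨e, he, rfl⟩, hne⟩
        exact ⟨e, ⟨he, fun hh => hne ⟨e, hh, rfl⟩⟩, rfl⟩
      · rintro ⟨e, ⟨he, heG⟩, rfl⟩
        refine ⟨⟨e, he, rfl⟩, ?_⟩
        rintro ⟨e', he', hw'⟩
        exact heG (hinj e he e' (hGA' he') hw'.symm ▸ (hinj e' (hGA' he') e he hw' ▸ he'))
    rw [worldPr, ← h1, h2,
      Finset.prod_image (fun x hx y hy hxy =>
        hinj x (Finset.mem_sdiff.mp hx).1 y (Finset.mem_sdiff.mp hy).1 hxy)]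
    exact congrArg _ (Finset.prod_congr rfl fun e he => by
      rw [show ((v, e.2) : V × V) = e from
        Prod.ext (hfst e (Finset.mem_sdiff.mp he).1).symm rfl])

/-- closed formula for `α_W(v)` via the Poisson-binomial
distribution of the number of existing arcs from `v` to
`O_𝒢(v) \ O_W(v)`. -/
theorem alphaW_eq_poisson_binomial (E : Finset (V × V)) (P : V × V → ℝ)
    (hP : ∀ e ∈ E, 0 < P e ∧ P e ≤ 1)
    (vs : ℕ → V) (k : ℕ)
    (hwalk : ∀ i < k, (vs i, vs (i + 1)) ∈ E)
    (v : V) (hv : v ∈ VW vs k) :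
    alphaW E P vs k v =
      (∏ w ∈ OW vs k v, P (v, w)) *
        ∑ x ∈ Finset.range ((outN E v \ OW vs k v).card + 1),
          rD P v (outN E v \ OW vs k v) x *
            invR (x + (OW vs k v).card) ^ (cW vs k v) := by
  classical
  have hON : OW vs k v ⊆ outN E v := by
    intro w hw
    simp only [OW, Finset.mem_image, Finset.mem_filter, Finset.mem_range] at hw
    obtain ⟨i, ⟨hik, hvi⟩, rfl⟩ := hw
    have hE := hwalk i hik
    rw [hvi] at hE
    simp only [outN, Finset.mem_image, Finset.mem_filter]
    exact ⟨(v, vs (i + 1)), ⟨hE, rfl⟩, rfl⟩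
  set O := OW vs k v with hO
  set c := cW vs k v with hc
  set N := outN E v with hN
  set g : Finset V → ℝ := fun T => if O ⊆ T then invR T.card ^ c else 0 with hg
  have hAE : E.filter (fun e => e.1 = v) ⊆ E := Finset.filter_subset _ _
  have houtN : ∀ G ∈ E.powerset, outN G v = (G ∩ E.filter (fun e => e.1 = v)).image Prod.snd := by
    intro G hG
    have hGE := Finset.mem_powerset.mp hG
    unfold outN
    congr 1
    ext e
    simp only [Finset.mem_filter, Finset.mem_inter]
    exact ⟨fun h => ⟨h.1, hGE h.1, h.2⟩, fun h => ⟨h.1, h.2.2⟩⟩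
  have step1 : alphaW E P vs k v = ∑ G ∈ E.powerset, worldPr E P G *
      g ((G ∩ E.filter (fun e => e.1 = v)).image Prod.snd) := by
    rw [alphaW, Finset.sum_filter]
    refine Finset.sum_congr rfl fun G hG => ?_
    rw [← houtN G hG, hg]
    by_cases h : O ⊆ outN G v <;> simp [h, hO, hc]
  have hEA : E.filter (fun e => e.1 = v) ∪ (E \ E.filter (fun e => e.1 = v)) = E :=
    Finset.union_sdiff_of_subset hAE
  have hdisj : Disjoint (E.filter (fun e => e.1 = v)) (E \ E.filter (fun e => e.1 = v)) :=
    Finset.disjoint_sdiff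
  have step2 := sum_worldPr_inter hdisj P (fun S => g (S.image Prod.snd))
  rw [hEA] at step2
  have step3 := sum_over_arcs E P v g
  rw [step1, step2, step3]
  have step4 : ∑ T ∈ N.powerset,
      ((∏ w ∈ T, P (v, w)) * ∏ w ∈ N \ T, (1 - P (v, w))) * g T
      = ∑ T ∈ N.powerset.filter (fun T => O ⊆ T),
        ((∏ w ∈ T, P (v, w)) * ∏ w ∈ N \ T, (1 - P (v, w))) * invR T.card ^ c := by
    rw [Finset.sum_filter]
    refine Finset.sum_congr rfl fun T _ => ?_
    by_cases h : O ⊆ T <;> simp [hg, h]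
  rw [step4]
  have step5 : ∑ T ∈ N.powerset.filter (fun T => O ⊆ T),
      ((∏ w ∈ T, P (v, w)) * ∏ w ∈ N \ T, (1 - P (v, w))) * invR T.card ^ c
      = ∑ S ∈ (N \ O).powerset, (∏ w ∈ O, P (v, w)) *
          (((∏ w ∈ S, P (v, w)) * ∏ w ∈ (N \ O) \ S, (1 - P (v, w)))
            * invR (S.card + O.card) ^ c) := by
    refine Finset.sum_bij' (fun T _ => T \ O) (fun S _ => S ∪ O) ?_ ?_ ?_ ?_ ?_
    · intro T hT
      simp only [Finset.mem_filter, Finset.mem_powerset] at hT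
      exact Finset.mem_powerset.mpr (Finset.sdiff_subset_sdiff hT.1 (le_refl O))
    · intro S hS
      have hS' := Finset.mem_powerset.mp hS
      simp only [Finset.mem_filter, Finset.mem_powerset]
      exact ⟨Finset.union_subset (hS'.trans Finset.sdiff_subset) hON,
        Finset.subset_union_right⟩
    · intro T hT
      simp only [Finset.mem_filter, Finset.mem_powerset] at hT
      exact Finset.sdiff_union_of_subset hT.2
    · intro S hS
      have hS' := Finset.mem_powerset.mp hS
      have hd : Disjoint S O := Finset.disjoint_of_subset_left hS' Finset.sdiff_disjoint
      ext w
      simp only [Finset.mem_sdiff, Finset.mem_union]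
      constructor
      · rintro ⟨h1 | h1, h2⟩
        · exact h1
        · exact absurd h1 h2
      · intro h
        exact ⟨Or.inl h, Finset.disjoint_left.mp hd h⟩
    · intro T hT
      simp only [Finset.mem_filter, Finset.mem_powerset] at hT
      obtain ⟨hT1, hT2⟩ := hT
      have hsplit : (T \ O) ∪ O = T := Finset.sdiff_union_of_subset hT2
      have hdTO : Disjoint (T \ O) O := Finset.sdiff_disjoint
      have e1 : ∏ w ∈ T, P (v, w) = (∏ w ∈ T \ O, P (v, w)) * ∏ w ∈ O, P (v, w) := by
        conv_lhs => rw [← hsplit]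
        rw [Finset.prod_union hdTO]
      have e2 : T.card = (T \ O).card + O.card := by
        conv_lhs => rw [← hsplit]
        rw [Finset.card_union_of_disjoint hdTO]
      have e3 : N \ T = (N \ O) \ (T \ O) := by
        ext w
        simp only [Finset.mem_sdiff]
        constructor
        · rintro ⟨h1, h2⟩
          exact ⟨⟨h1, fun h => h2 (hT2 h)⟩, fun h => h2 h.1⟩
        · rintro ⟨⟨h1, h2⟩, h3⟩
          exact ⟨h1, fun h => h3 ⟨h, h2⟩⟩
      rw [e1, e2, e3]
      ring
  rw [step5, ← Finset.mul_sum]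
  congr 1
  rw [Finset.sum_powerset]
  refine Finset.sum_congr rfl fun x hx => ?_
  have hcong : ∀ S ∈ Finset.powersetCard x (N \ O),
      ((∏ w ∈ S, P (v, w)) * ∏ w ∈ (N \ O) \ S, (1 - P (v, w)))
          * invR (S.card + O.card) ^ c
        = ((∏ w ∈ S, P (v, w)) * ∏ w ∈ (N \ O) \ S, (1 - P (v, w)))
          * invR (x + O.card) ^ c :=
    fun S hS => by rw [(Finset.mem_powersetCard.mp hS).2]
  rw [Finset.sum_congr rfl hcong, ← Finset.sum_mul, rD, ← Finset.powersetCard_eq_filter]
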